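/- arXiv:2501.18570 — 2 statements merged into one kernel-verified Lean document; each statement's English description precedes it below -/
import Mathlib

section
/- Let n ≥ 2 and let F be a forest on the vertex set {1,…,n} (a spanning forest, i.e., every vertex of {1,…,n} is a vertex of F, isolated vertices allowed) whose connected components have sizes n_1, n_2, …, n_k. Then the number of spanning trees of the complete graph K_n that contain F as a subgraph equals (n_1 · n_2 ⋯ n_k) · n^{k−2}. -/
open SimpleGraph

variable {V : Type*}

lemma reach_sup_edge {G : SimpleGraph V} {u v x y : V}
    (h : (G ⊔ edge u v).Reachable x y) :
    G.Reachable x y ∨ (G.Reachable x u ∧ G.Reachable v y) ∨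
      (G.Reachable x v ∧ G.Reachable u y) := by
  obtain ⟨w⟩ := h
  induction w with
  | nil => exact Or.inl (Reachable.refl _)
  | cons h p ih =>
    rcases h with h | h
    · rcases ih with h1 | ⟨h1, h2⟩ | ⟨h1, h2⟩
      · exact Or.inl (h.reachable.trans h1)
      · exact Or.inr (Or.inl ⟨h.reachable.trans h1, h2⟩)
      · exact Or.inr (Or.inr ⟨h.reachable.trans h1, h2⟩)
    · rw [edge_adj] at h
      obtain ⟨h | h, -⟩ := h
      · obtain ⟨rfl, rfl⟩ := h
        rcases ih with h1 | ⟨h1, h2⟩ | ⟨h1, h2⟩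
        · exact Or.inr (Or.inl ⟨Reachable.refl _, h1⟩)
        · exact Or.inl (h1.symm.trans h2)
        · exact Or.inl h2
      · obtain ⟨rfl, rfl⟩ := h
        rcases ih with h1 | ⟨h1, h2⟩ | ⟨h1, h2⟩
        · exact Or.inr (Or.inr ⟨Reachable.refl _, h1⟩)
        · exact Or.inl h2
        · exact Or.inl (h1.symm.trans h2)

lemma adj_of_reach {F T : SimpleGraph V} (hT : T.IsAcyclic) (hle : F ≤ T)
    {a b : V} (hadj : T.Adj a b) (hreach : F.Reachable a b) : F.Adj a b := by
  classical
  by_contra hne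
  obtain ⟨w⟩ := hreach.symm
  have hp : (w.toPath : F.Walk b a).IsPath := (w.toPath).2
  set p : F.Walk b a := (w.toPath : F.Walk b a)
  have hsub : ∀ e ∈ p.edges, e ∈ T.edgeSet :=
    fun e he => edgeSet_mono hle (p.edges_subset_edgeSet he)
  have hcyc : (SimpleGraph.Walk.cons hadj (p.transfer T hsub)).IsCycle := by
    rw [SimpleGraph.Walk.cons_isCycle_iff]
    refine ⟨hp.transfer _, ?_⟩
    rw [SimpleGraph.Walk.edges_transfer]
    intro hmem
    exact hne (F.mem_edgeSet.mp (p.edges_subset_edgeSet hmem))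
  exact hT _ hcyc

lemma acyclic_sup_edge {G : SimpleGraph V} {u v : V} (hG : G.IsAcyclic)
    (h : ¬G.Reachable u v) : (G ⊔ edge u v).IsAcyclic := by
  have hne : u ≠ v := fun e => h (e ▸ Reachable.refl u)
  rw [isAcyclic_iff_forall_adj_isBridge]
  intro x y hxy
  have hGle : (G ⊔ edge u v) \ fromEdgeSet {s(u, v)} ≤ G := by
    intro a b hab
    rw [sdiff_adj, sup_adj, edge_adj] at hab
    obtain ⟨h1 | h1, h2⟩ := hab
    · exact h1
    · exact absurd (by
        rw [fromEdgeSet_adj]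
        obtain ⟨h3 | h3, h4⟩ := h1
        · exact ⟨by rw [h3.1, h3.2]; exact rfl, h4⟩
        · exact ⟨by rw [h3.1, h3.2, Sym2.eq_swap]; exact rfl, h4⟩) h2
  rcases hxy with hxy | hxy
  · have hb : G.IsBridge s(x, y) := isAcyclic_iff_forall_adj_isBridge.mp hG hxy
    rw [isBridge_iff] at hb ⊢
    refine fun hr => ?_
    have hle2 : (G ⊔ edge u v) \ fromEdgeSet {s(x, y)} ≤
        (G \ fromEdgeSet {s(x, y)}) ⊔ edge u v := by
      intro a b hab
      simp only [sdiff_adj, sup_adj] at hab ⊢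
      tauto
    have hd := reach_sup_edge (Reachable.mono hle2 hr)
    have hmono : (G \ fromEdgeSet {s(x, y)}) ≤ G := sdiff_le
    rcases hd with h1 | ⟨h1, h2⟩ | ⟨h1, h2⟩
    · exact hb h1
    · exact h ((h1.mono hmono).symm.trans
        (hxy.reachable.trans (h2.mono hmono).symm))
    · exact h ((h2.mono hmono).trans
        (hxy.symm.reachable.trans (h1.mono hmono)))
  · rw [edge_adj] at hxy
    have hxyuv : s(x, y) = s(u, v) := by
      obtain ⟨h3 | h3, -⟩ := hxy
      · rw [h3.1, h3.2]
      · rw [h3.1, h3.2, Sym2.eq_swap]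
    rw [hxyuv, isBridge_iff]
    exact fun hr => h (hr.mono hGle)

section CC

variable {G : SimpleGraph V} {u v : V}

lemma reach_sup_edge_iff (hne : u ≠ v) {x y : V} :
    (G ⊔ edge u v).Reachable x y ↔
      G.Reachable x y ∨ (G.Reachable x u ∧ G.Reachable v y) ∨
      (G.Reachable x v ∧ G.Reachable u y) := by
  constructor
  · exact reach_sup_edge
  · have hadj : (G ⊔ edge u v).Adj u v :=
      Or.inr ((edge_adj u v u v).mpr ⟨Or.inl ⟨rfl, rfl⟩, hne⟩)
    rintro (h1 | ⟨h1, h2⟩ | ⟨h1, h2⟩)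
    · exact h1.mono le_sup_left
    · exact ((h1.mono le_sup_left).trans hadj.reachable).trans (h2.mono le_sup_left)
    · exact ((h1.mono le_sup_left).trans hadj.symm.reachable).trans (h2.mono le_sup_left)

/-- The canonical map on connected components induced by `G ≤ G ⊔ edge u v`. -/
noncomputable abbrev ccMap (G : SimpleGraph V) (u v : V) :
    G.ConnectedComponent → (G ⊔ edge u v).ConnectedComponent :=
  ConnectedComponent.map (Hom.ofLE le_sup_left)

lemma ccMap_mk (x : V) :
    ccMap G u v (G.connectedComponentMk x) =
      (G ⊔ edge u v).connectedComponentMk x := rfl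

lemma ccMap_mk' (x : V) :
    ccMap G u v (Quot.mk G.Reachable x) =
      (G ⊔ edge u v).connectedComponentMk x := rfl

lemma cc_mk_quot (x : V) :
    (Quot.mk G.Reachable x : G.ConnectedComponent) = G.connectedComponentMk x := rfl

lemma ccMap_bij (hno : ¬G.Reachable u v) :
    Function.Bijective (fun c : {c : G.ConnectedComponent //
        c ≠ G.connectedComponentMk v} => ccMap G u v c.1) := by
  have hne : u ≠ v := fun e => hno (e ▸ Reachable.refl u)
  constructor
  · rintro ⟨c, hc⟩ ⟨d, hd⟩ hcd
    obtain ⟨x, rfl⟩ := c.exists_rep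
    obtain ⟨y, rfl⟩ := d.exists_rep
    simp only [ccMap_mk', ConnectedComponent.eq] at hcd
    rcases reach_sup_edge hcd with h1 | ⟨h1, h2⟩ | ⟨h1, h2⟩
    · exact Subtype.ext (ConnectedComponent.eq.mpr h1)
    · exact absurd (cc_mk_quot y ▸ ConnectedComponent.eq.mpr h2.symm) hd
    · exact absurd (cc_mk_quot x ▸ ConnectedComponent.eq.mpr h1) hc
  · intro d
    obtain ⟨x, rfl⟩ := d.exists_rep
    by_cases hx : G.Reachable x v
    · refine ⟨⟨G.connectedComponentMk u, fun e => hno (ConnectedComponent.eq.mp e)⟩, ?_⟩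
      simp only [ccMap_mk, cc_mk_quot, ConnectedComponent.eq]
      exact (reach_sup_edge_iff hne).mpr (Or.inr (Or.inl ⟨Reachable.refl u, hx.symm⟩))
    · exact ⟨⟨G.connectedComponentMk x, fun e => hx (ConnectedComponent.eq.mp e)⟩, rfl⟩

lemma ccMap_supp_of_ne (hne : u ≠ v) {c : G.ConnectedComponent}
    (hcu : c ≠ G.connectedComponentMk u) (hcv : c ≠ G.connectedComponentMk v) :
    (ccMap G u v c).supp = c.supp := by
  obtain ⟨w, rfl⟩ := c.exists_rep
  ext x
  simp only [ConnectedComponent.mem_supp_iff, cc_mk_quot, ccMap_mk, ConnectedComponent.eq]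
  rw [reach_sup_edge_iff hne]
  constructor
  · rintro (h1 | ⟨h1, h2⟩ | ⟨h1, h2⟩)
    · exact h1
    · exact absurd (cc_mk_quot w ▸ ConnectedComponent.eq.mpr h2.symm) hcv
    · exact absurd (cc_mk_quot w ▸ ConnectedComponent.eq.mpr h2.symm) hcu
  · exact Or.inl

lemma ccMap_supp_u (hno : ¬G.Reachable u v) :
    (ccMap G u v (G.connectedComponentMk u)).supp =
      (G.connectedComponentMk u).supp ∪ (G.connectedComponentMk v).supp := by
  have hne : u ≠ v := fun e => hno (e ▸ Reachable.refl u)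
  ext x
  simp only [Set.mem_union, ConnectedComponent.mem_supp_iff, ccMap_mk,
    ConnectedComponent.eq]
  rw [reach_sup_edge_iff hne]
  constructor
  · rintro (h1 | ⟨h1, h2⟩ | ⟨h1, h2⟩)
    · exact Or.inl h1
    · exact Or.inl h1
    · exact Or.inr h1
  · rintro (h1 | h1)
    · exact Or.inl h1
    · exact Or.inr (Or.inr ⟨h1, Reachable.refl u⟩)

end CC

section CCFin

variable [Fintype V] {G : SimpleGraph V} {u v : V}

lemma card_cc_sup_edge (hno : ¬G.Reachable u v) :
    Nat.card (G ⊔ edge u v).ConnectedComponent + 1 =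
      Nat.card G.ConnectedComponent := by
  classical
  letI : Fintype G.ConnectedComponent := Fintype.ofFinite _
  letI : Fintype (G ⊔ edge u v).ConnectedComponent := Fintype.ofFinite _
  have h1 := Nat.card_eq_of_bijective _ (ccMap_bij hno)
  rw [← h1]
  simp only [Nat.card_eq_fintype_card]
  have h2 : Fintype.card {c : G.ConnectedComponent // c ≠ G.connectedComponentMk v} =
      Fintype.card G.ConnectedComponent -
        Fintype.card {c : G.ConnectedComponent // c = G.connectedComponentMk v} :=
    Fintype.card_subtype_compl _
  rw [h2, Fintype.card_subtype_eq]
  have : 1 ≤ Fintype.card G.ConnectedComponent := by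
    have : Nonempty G.ConnectedComponent := ⟨G.connectedComponentMk v⟩
    exact Fintype.card_pos
  omega

lemma disjoint_supp_of_ne {c d : G.ConnectedComponent} (h : c ≠ d) :
    Disjoint c.supp d.supp := by
  rw [Set.disjoint_left]
  intro x hx hx'
  rw [ConnectedComponent.mem_supp_iff] at hx hx'
  exact h (hx ▸ hx')

lemma prod_cc_sup_edge (hno : ¬G.Reachable u v) :
    (∏ᶠ d : (G ⊔ edge u v).ConnectedComponent, (Nat.card d.supp : ℚ)) *
      ((Nat.card (G.connectedComponentMk u).supp : ℚ) *
        (Nat.card (G.connectedComponentMk v).supp : ℚ)) =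
    (∏ᶠ c : G.ConnectedComponent, (Nat.card c.supp : ℚ)) *
      ((Nat.card (G.connectedComponentMk u).supp : ℚ) +
        (Nat.card (G.connectedComponentMk v).supp : ℚ)) := by
  classical
  have hne : u ≠ v := fun e => hno (e ▸ Reachable.refl u)
  letI : Fintype G.ConnectedComponent := Fintype.ofFinite _
  letI : Fintype (G ⊔ edge u v).ConnectedComponent := Fintype.ofFinite _
  set cu := G.connectedComponentMk u with hcu
  set cv := G.connectedComponentMk v with hcv
  have hcucv : cu ≠ cv := fun e => hno (ConnectedComponent.eq.mp e)
  set f : G.ConnectedComponent → ℚ := fun c => (Nat.card c.supp : ℚ) with hf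
  set g : (G ⊔ edge u v).ConnectedComponent → ℚ :=
    fun d => (Nat.card d.supp : ℚ) with hg
  have h1 : ∏ᶠ d, g d = ∏ c : {c : G.ConnectedComponent // c ≠ cv}, g (ccMap G u v c.1) := by
    rw [finprod_eq_prod_of_fintype]
    exact ((Equiv.ofBijective _ (ccMap_bij hno)).prod_comp g).symm
  have h2 : ∏ c : {c : G.ConnectedComponent // c ≠ cv}, g (ccMap G u v c.1) =
      ∏ c ∈ Finset.univ.erase cv, g (ccMap G u v c) := by
    rw [Finset.prod_subtype (p := fun c => c ≠ cv) (Finset.univ.erase cv)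
      (fun c => by simp [Finset.mem_erase]) (fun c => g (ccMap G u v c))]
  have hmem : cu ∈ Finset.univ.erase cv := Finset.mem_erase.mpr ⟨hcucv, Finset.mem_univ _⟩
  have h3 : ∏ c ∈ Finset.univ.erase cv, g (ccMap G u v c) =
      g (ccMap G u v cu) * ∏ c ∈ (Finset.univ.erase cv).erase cu, g (ccMap G u v c) :=
    (Finset.mul_prod_erase _ _ hmem).symm
  have h4 : ∏ c ∈ (Finset.univ.erase cv).erase cu, g (ccMap G u v c) =
      ∏ c ∈ (Finset.univ.erase cv).erase cu, f c := by
    apply Finset.prod_congr rfl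
    intro c hc
    rw [Finset.mem_erase, Finset.mem_erase] at hc
    rw [hg, hf]
    simp only []
    rw [ccMap_supp_of_ne hne hc.1 hc.2.1]
  have hab : g (ccMap G u v cu) = f cu + f cv := by
    rw [hg, hf]
    simp only []
    rw [ccMap_supp_u hno]
    rw [Nat.card_coe_set_eq, Nat.card_coe_set_eq, Nat.card_coe_set_eq,
      Set.ncard_union_eq (disjoint_supp_of_ne hcucv)]
    push_cast
    ring
  have h5 : ∏ᶠ c, f c = f cv * (f cu * ∏ c ∈ (Finset.univ.erase cv).erase cu, f c) := by
    rw [finprod_eq_prod_of_fintype,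
      ← Finset.mul_prod_erase Finset.univ f (Finset.mem_univ cv),
      ← Finset.mul_prod_erase _ f hmem]
  rw [h1, h2, h3, h4, hab, h5]
  ring

end CCFin

lemma acyclic_mono {G H : SimpleGraph V} (h : G ≤ H) (hH : H.IsAcyclic) :
    G.IsAcyclic := fun _ p hp => hH _ (hp.mapLe h)

lemma edge_le_iff' {G : SimpleGraph V} {u v : V} (hne : u ≠ v) :
    edge u v ≤ G ↔ G.Adj u v := by
  constructor
  · intro h
    exact h ((edge_adj u v u v).mpr ⟨Or.inl ⟨rfl, rfl⟩, hne⟩)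
  · intro h a b hab
    rw [edge_adj] at hab
    obtain ⟨h1 | h1, -⟩ := hab
    · rw [h1.1, h1.2]; exact h
    · rw [h1.1, h1.2]; exact h.symm

lemma nat_card_edgeSet [Fintype V] [DecidableEq V] (G : SimpleGraph V)
    [Fintype G.edgeSet] : Nat.card G.edgeSet = G.edgeFinset.card := by
  rw [Nat.card_coe_set_eq, Set.ncard_eq_toFinset_card']
  rfl

lemma card_cc_bot [Fintype V] :
    Nat.card (⊥ : SimpleGraph V).ConnectedComponent = Fintype.card V := by
  rw [← Nat.card_eq_fintype_card]
  refine (Nat.card_eq_of_bijective (fun x => (⊥ : SimpleGraph V).connectedComponentMk x)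
    ⟨?_, ?_⟩).symm
  · intro a b hab
    simpa [reachable_bot] using ConnectedComponent.eq.mp hab
  · intro c
    obtain ⟨x, rfl⟩ := c.exists_rep
    exact ⟨x, rfl⟩

lemma forest_card [Fintype V] (F : SimpleGraph V) (hF : F.IsAcyclic) :
    Nat.card F.edgeSet + Nat.card F.ConnectedComponent = Fintype.card V := by
  classical
  suffices h : ∀ (m : ℕ) (F : SimpleGraph V), F.IsAcyclic → Nat.card F.edgeSet = m →
      Nat.card F.edgeSet + Nat.card F.ConnectedComponent = Fintype.card V from
    h _ F hF rfl
  intro m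
  induction m with
  | zero =>
    intro F hF hcard
    have hbot : F = ⊥ := by
      have hc2 := hcard
      rw [Nat.card_eq_zero] at hc2
      rw [← edgeSet_eq_empty]
      rcases hc2 with h | h
      · exact Set.isEmpty_coe_sort.mp h
      · exact (h.not_finite inferInstance).elim
    subst hbot
    rw [hcard, zero_add]
    exact card_cc_bot
  | succ m ih =>
    intro F hF hcard
    have hne0 : F.edgeSet.Nonempty := by
      by_contra h
      rw [Set.not_nonempty_iff_eq_empty] at h
      rw [h] at hcard
      simp at hcard
    obtain ⟨e, he⟩ := hne0
    induction e with
    | _ u v =>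
      have hu : F.Adj u v := F.mem_edgeSet.mp he
      have hne : u ≠ v := hu.ne
      set F2 := F \ edge u v with hF2
      have hle : edge u v ≤ F := (edge_le_iff' hne).mpr hu
      have hsplit : F2 ⊔ edge u v = F := sdiff_sup_cancel hle
      have hnadj : ¬F2.Adj u v := by
        rw [hF2, sdiff_adj]
        rintro ⟨-, h2⟩
        exact h2 ((edge_adj u v u v).mpr ⟨Or.inl ⟨rfl, rfl⟩, hne⟩)
      have hno : ¬F2.Reachable u v := by
        have hb := isAcyclic_iff_forall_adj_isBridge.mp hF hu
        rw [isBridge_iff] at hb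
        have : F \ fromEdgeSet {s(u, v)} = F2 := rfl
        exact hb
      have hF2ac : F2.IsAcyclic := acyclic_mono sdiff_le hF
      have hedges : Nat.card F.edgeSet = Nat.card F2.edgeSet + 1 := by
        rw [← hsplit, nat_card_edgeSet, nat_card_edgeSet]
        have h := F2.card_edgeFinset_sup_edge hnadj hne
        convert h using 4
      have hcc := card_cc_sup_edge hno
      rw [hsplit] at hcc
      have hih := ih F2 hF2ac (by omega)
      omega

lemma tree_eq_of_le {F T : SimpleGraph V} [Fintype V] (hle : F ≤ T)
    (hF : F.IsTree) (hT : T.IsTree) : T = F := by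
  classical
  have hsub : F.edgeFinset ⊆ T.edgeFinset := edgeFinset_subset_edgeFinset.mpr hle
  have h1 := hF.card_edgeFinset
  have h2 := hT.card_edgeFinset
  rw [← edgeFinset_inj]
  exact (Finset.eq_of_subset_of_card_le hsub (by omega)).symm

lemma sum_comp_cc [Fintype V] (G : SimpleGraph V) (g : G.ConnectedComponent → ℚ) :
    ∑ v : V, g (G.connectedComponentMk v) =
      ∑ᶠ c : G.ConnectedComponent, (Nat.card c.supp : ℚ) * g c := by
  classical
  letI : Fintype G.ConnectedComponent := Fintype.ofFinite _
  rw [finsum_eq_sum_of_fintype]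
  rw [← Finset.sum_fiberwise Finset.univ (fun v => G.connectedComponentMk v)
    (fun v => g (G.connectedComponentMk v))]
  apply Finset.sum_congr rfl
  intro c _
  have hfib : Finset.univ.filter (fun v => G.connectedComponentMk v = c) =
      c.supp.toFinset := by
    ext x
    simp [ConnectedComponent.mem_supp_iff]
  calc ∑ v ∈ Finset.univ.filter (fun v => G.connectedComponentMk v = c),
        g (G.connectedComponentMk v)
      = ∑ v ∈ Finset.univ.filter (fun v => G.connectedComponentMk v = c), g c := by
        apply Finset.sum_congr rfl
        intro x hx
        rw [(Finset.mem_filter.mp hx).2]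
    _ = (Nat.card c.supp : ℚ) * g c := by
        rw [Finset.sum_const, hfib, Nat.card_coe_set_eq, Set.ncard_eq_toFinset_card']
        simp [nsmul_eq_mul]

lemma crossing_count [Fintype V] {F T : SimpleGraph V}
    [DecidablePred fun p : V × V => T.Adj p.1 p.2 ∧ ¬F.Reachable p.1 p.2]
    (hF : F.IsAcyclic) (hT : T.IsTree) (hle : F ≤ T) :
    (Finset.univ.filter fun p : V × V => T.Adj p.1 p.2 ∧ ¬F.Reachable p.1 p.2).card + 2 =
      2 * Nat.card F.ConnectedComponent := by
  classical
  set A := Finset.univ.filter fun p : V × V => T.Adj p.1 p.2 ∧ ¬F.Reachable p.1 p.2 with hA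
  set C := T.edgeFinset \ F.edgeFinset with hC
  have hmaps : ∀ p ∈ A, s(p.1, p.2) ∈ C := by
    rintro ⟨a, b⟩ hp
    rw [hA, Finset.mem_filter] at hp
    obtain ⟨-, h1, h2⟩ := hp
    rw [hC, Finset.mem_sdiff, mem_edgeFinset, mem_edgeFinset]
    exact ⟨T.mem_edgeSet.mpr h1, fun hmem => h2 (F.mem_edgeSet.mp hmem).reachable⟩
  have hcount : A.card = ∑ e ∈ C, (A.filter fun p => s(p.1, p.2) = e).card :=
    Finset.card_eq_sum_card_fiberwise hmaps
  have hfib : ∀ e ∈ C, (A.filter fun p => s(p.1, p.2) = e).card = 2 := by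
    intro e he
    induction e with
    | _ a b =>
      rw [hC, Finset.mem_sdiff, mem_edgeFinset, mem_edgeFinset] at he
      have hadj : T.Adj a b := T.mem_edgeSet.mp he.1
      have hnadj : ¬F.Adj a b := fun h => he.2 (F.mem_edgeSet.mpr h)
      have hnr : ¬F.Reachable a b := fun h => hnadj (adj_of_reach hT.2 hle hadj h)
      have hne : a ≠ b := hadj.ne
      have : A.filter (fun p => s(p.1, p.2) = s(a, b)) = {(a, b), (b, a)} := by
        ext ⟨x, y⟩
        rw [Finset.mem_filter, hA, Finset.mem_filter]
        simp only [Finset.mem_univ, true_and, Finset.mem_insert, Finset.mem_singleton,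
          Prod.mk.injEq, Sym2.eq_iff]
        constructor
        · rintro ⟨-, h | h⟩
          · exact Or.inl ⟨h.1, h.2⟩
          · exact Or.inr ⟨h.1, h.2⟩
        · rintro (⟨rfl, rfl⟩ | ⟨rfl, rfl⟩)
          · exact ⟨⟨hadj, hnr⟩, Or.inl ⟨rfl, rfl⟩⟩
          · exact ⟨⟨hadj.symm, fun h => hnr h.symm⟩, Or.inr ⟨rfl, rfl⟩⟩
      rw [this, Finset.card_insert_of_notMem (by simp [Prod.ext_iff, hne]),
        Finset.card_singleton]
  have hsum : A.card = 2 * C.card := by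
    rw [hcount, Finset.sum_congr rfl hfib, Finset.sum_const, smul_eq_mul, mul_comm]
  have hCcard : C.card = T.edgeFinset.card - F.edgeFinset.card :=
    Finset.card_sdiff_of_subset (edgeFinset_subset_edgeFinset.mpr hle)
  have hTcard := hT.card_edgeFinset
  have hFcard := forest_card F hF
  rw [nat_card_edgeSet] at hFcard
  have hsubcard : F.edgeFinset.card ≤ T.edgeFinset.card :=
    Finset.card_le_card (edgeFinset_subset_edgeFinset.mpr hle)
  have hV : 1 ≤ Fintype.card V := by
    have : Nonempty V := hT.1.nonempty
    exact Fintype.card_pos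
  omega

lemma finite_simpleGraph [Finite V] : Finite (SimpleGraph V) :=
  Finite.of_injective (fun G => G.edgeSet) fun _ _ h => edgeSet_inj.mp h

section DC

open scoped Classical

lemma nat_card_subtype {α : Type*} (P : α → Prop) [Fintype α] [DecidablePred P] :
    Nat.card {x : α // P x} = (Finset.univ.filter P).card := by
  rw [Nat.card_eq_fintype_card, Fintype.card_subtype]

lemma double_count [Fintype V] {F : SimpleGraph V} (hF : F.IsAcyclic) :
    ∑ p ∈ Finset.univ.filter (fun p : V × V => ¬F.Reachable p.1 p.2),
      Nat.card {T : SimpleGraph V // F ⊔ edge p.1 p.2 ≤ T ∧ T.IsTree}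
      + 2 * Nat.card {T : SimpleGraph V // F ≤ T ∧ T.IsTree}
    = 2 * Nat.card F.ConnectedComponent *
        Nat.card {T : SimpleGraph V // F ≤ T ∧ T.IsTree} := by
  letI : Fintype (SimpleGraph V) := @Fintype.ofFinite _ finite_simpleGraph
  set S : Finset (V × V) := Finset.univ.filter (fun p : V × V => ¬F.Reachable p.1 p.2)
    with hS
  set TR : Finset (SimpleGraph V) := Finset.univ.filter (fun T => F ≤ T ∧ T.IsTree)
    with hTR
  set X : Finset (SimpleGraph V × (V × V)) := Finset.univ.filter
    (fun q => (F ≤ q.1 ∧ q.1.IsTree) ∧ q.1.Adj q.2.1 q.2.2 ∧ ¬F.Reachable q.2.1 q.2.2)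
    with hX
  -- count by second coordinate
  have hmaps2 : ∀ q ∈ X, q.2 ∈ S := by
    intro q hq
    rw [hX, Finset.mem_filter] at hq
    rw [hS, Finset.mem_filter]
    exact ⟨Finset.mem_univ _, hq.2.2.2⟩
  have hcount2 : X.card = ∑ p ∈ S, (X.filter fun q => q.2 = p).card :=
    Finset.card_eq_sum_card_fiberwise hmaps2
  have hfib2 : ∀ p ∈ S, (X.filter fun q => q.2 = p).card =
      Nat.card {T : SimpleGraph V // F ⊔ edge p.1 p.2 ≤ T ∧ T.IsTree} := by
    rintro ⟨a, b⟩ hp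
    rw [hS, Finset.mem_filter] at hp
    have hne : a ≠ b := fun e => hp.2 (e ▸ Reachable.refl a)
    rw [nat_card_subtype]
    apply Finset.card_bij (fun q _ => q.1)
    · rintro ⟨T, p⟩ hq
      simp only [Finset.mem_filter, hX] at hq
      obtain ⟨⟨-, ⟨h1, h2⟩, h3, -⟩, h4⟩ := hq
      simp only [Finset.mem_filter]
      subst h4
      exact ⟨Finset.mem_univ _, sup_le_iff.mpr ⟨h1, (edge_le_iff' hne).mpr h3⟩, h2⟩
    · rintro ⟨T, p⟩ hq ⟨T', p'⟩ hq' h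
      rw [Finset.mem_filter] at hq hq'
      simp only at h
      rw [Prod.ext_iff]
      exact ⟨h, hq.2.trans hq'.2.symm⟩
    · intro T hT
      simp only [Finset.mem_filter] at hT
      obtain ⟨-, hle, htree⟩ := hT
      have hle' : F ≤ T := le_trans le_sup_left hle
      have hadj : T.Adj a b := (edge_le_iff' hne).mp (le_trans le_sup_right hle)
      refine ⟨(T, (a, b)), ?_, rfl⟩
      simp only [Finset.mem_filter, hX]
      exact ⟨⟨Finset.mem_univ _, ⟨hle', htree⟩, hadj, hp.2⟩, trivial⟩
  -- count by first coordinate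
  have hmaps1 : ∀ q ∈ X, q.1 ∈ TR := by
    intro q hq
    rw [hX, Finset.mem_filter] at hq
    rw [hTR, Finset.mem_filter]
    exact ⟨Finset.mem_univ _, hq.2.1⟩
  have hcount1 : X.card = ∑ T ∈ TR, (X.filter fun q => q.1 = T).card :=
    Finset.card_eq_sum_card_fiberwise hmaps1
  have hfib1 : ∀ T ∈ TR, (X.filter fun q => q.1 = T).card + 2 =
      2 * Nat.card F.ConnectedComponent := by
    intro T hT
    rw [hTR, Finset.mem_filter] at hT
    obtain ⟨-, hle, htree⟩ := hT
    have hA : (X.filter fun q => q.1 = T).card =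
        (Finset.univ.filter fun p : V × V => T.Adj p.1 p.2 ∧ ¬F.Reachable p.1 p.2).card := by
      apply Finset.card_bij (fun q _ => q.2)
      · rintro ⟨T', p⟩ hq
        rw [Finset.mem_filter, hX, Finset.mem_filter] at hq
        obtain ⟨⟨-, -, h3, h4⟩, h5⟩ := hq
        subst h5
        rw [Finset.mem_filter]
        exact ⟨Finset.mem_univ _, h3, h4⟩
      · rintro ⟨T1, p1⟩ hq1 ⟨T2, p2⟩ hq2 h
        rw [Finset.mem_filter] at hq1 hq2
        simp only at h
        rw [Prod.ext_iff]
        exact ⟨hq1.2.trans hq2.2.symm, h⟩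
      · intro p hp
        rw [Finset.mem_filter] at hp
        refine ⟨(T, p), ?_, rfl⟩
        rw [Finset.mem_filter, hX, Finset.mem_filter]
        exact ⟨⟨Finset.mem_univ _, ⟨hle, htree⟩, hp.2⟩, rfl⟩
    rw [hA]
    exact crossing_count hF htree hle
  -- combine
  have e1 : ∑ T ∈ TR, ((X.filter fun q => q.1 = T).card + 2) =
      TR.card * (2 * Nat.card F.ConnectedComponent) := by
    rw [Finset.sum_congr rfl hfib1, Finset.sum_const, smul_eq_mul]
  rw [Finset.sum_add_distrib, Finset.sum_const, smul_eq_mul] at e1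
  have h2 : X.card + 2 * TR.card = 2 * Nat.card F.ConnectedComponent * TR.card := by
    rw [hcount1, mul_comm (2 * Nat.card F.ConnectedComponent) TR.card]
    omega
  have h3 : TR.card = Nat.card {T : SimpleGraph V // F ≤ T ∧ T.IsTree} := by
    rw [hTR]
    exact (nat_card_subtype _).symm
  calc ∑ p ∈ S, Nat.card {T : SimpleGraph V // F ⊔ edge p.1 p.2 ≤ T ∧ T.IsTree}
        + 2 * Nat.card {T : SimpleGraph V // F ≤ T ∧ T.IsTree}
      = X.card + 2 * TR.card := by
        rw [h3, hcount2]
        congr 1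
        exact (Finset.sum_congr rfl hfib2).symm
    _ = 2 * Nat.card F.ConnectedComponent * TR.card := h2
    _ = _ := by rw [h3]

end DC

section Sums

open scoped Classical

lemma supp_card_pos [Fintype V] {G : SimpleGraph V} (c : G.ConnectedComponent) :
    0 < Nat.card c.supp := by
  obtain ⟨x, hx⟩ := c.exists_rep
  have hx2 : x ∈ c.supp := (ConnectedComponent.mem_supp_iff c x).mpr hx
  haveI : Nonempty c.supp := ⟨⟨x, hx2⟩⟩
  exact Nat.card_pos

lemma sum_inv_vertex [Fintype V] (G : SimpleGraph V) :
    ∑ x : V, (1 : ℚ) / (Nat.card (G.connectedComponentMk x).supp) =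
      Nat.card G.ConnectedComponent := by
  rw [sum_comp_cc G (fun c => (1 : ℚ) / (Nat.card c.supp))]
  letI : Fintype G.ConnectedComponent := Fintype.ofFinite _
  rw [finsum_eq_sum_of_fintype]
  have : ∀ c : G.ConnectedComponent,
      (Nat.card c.supp : ℚ) * ((1 : ℚ) / (Nat.card c.supp)) = 1 := by
    intro c
    rw [mul_one_div, div_self]
    exact_mod_cast (supp_card_pos c).ne'
  rw [Finset.sum_congr rfl (fun c _ => this c), Finset.sum_const, Finset.card_univ,
    nsmul_eq_mul, mul_one, Nat.card_eq_fintype_card]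

lemma filter_reach_card [Fintype V] (G : SimpleGraph V) (x : V) :
    (Finset.univ.filter fun y => G.Reachable x y).card =
      Nat.card (G.connectedComponentMk x).supp := by
  rw [Nat.card_coe_set_eq, Set.ncard_eq_toFinset_card']
  congr 1
  ext y
  simp only [Finset.mem_filter, Finset.mem_univ, true_and, Set.mem_toFinset,
    ConnectedComponent.mem_supp_iff, ConnectedComponent.eq]
  exact ⟨Reachable.symm, Reachable.symm⟩

lemma sum_invs [Fintype V] (G : SimpleGraph V) :
    (∑ p ∈ Finset.univ.filter (fun p : V × V => ¬G.Reachable p.1 p.2),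
      ((1 : ℚ) / (Nat.card (G.connectedComponentMk p.1).supp) +
       (1 : ℚ) / (Nat.card (G.connectedComponentMk p.2).supp)))
    = 2 * Fintype.card V * ((Nat.card G.ConnectedComponent : ℚ) - 1) := by
  set α : V → ℚ := fun x => (Nat.card (G.connectedComponentMk x).supp : ℚ) with hα
  have hαpos : ∀ x, 0 < α x := fun x => by
    simp only [hα]; exact_mod_cast supp_card_pos _
  have hsum1 : ∑ p ∈ Finset.univ.filter (fun p : V × V => ¬G.Reachable p.1 p.2),
      (1 : ℚ) / α p.1 =
      (Fintype.card V : ℚ) * Nat.card G.ConnectedComponent - Fintype.card V := by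
    rw [Finset.sum_filter]
    rw [Fintype.sum_prod_type]
    have hinner : ∀ x : V, (∑ y : V, if ¬G.Reachable x y then (1 : ℚ) / α x else 0) =
        ((Fintype.card V : ℚ) - α x) * (1 / α x) := by
      intro x
      rw [← Finset.sum_filter, Finset.sum_const, nsmul_eq_mul]
      congr 1
      have h1 : Finset.univ.filter (fun y => ¬G.Reachable x y) =
          Finset.univ \ Finset.univ.filter (fun y => G.Reachable x y) :=
        Finset.filter_not _ _
      rw [h1, Finset.card_sdiff_of_subset (Finset.filter_subset _ _), Finset.card_univ,
        filter_reach_card]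
      rw [hα]
      have hle : Nat.card (G.connectedComponentMk x).supp ≤ Fintype.card V := by
        rw [← filter_reach_card]
        exact (Finset.card_filter_le _ _).trans (by rw [Finset.card_univ])
      push_cast [Nat.cast_sub hle]
      ring
    rw [Finset.sum_congr rfl (fun x _ => hinner x)]
    have : ∀ x : V, ((Fintype.card V : ℚ) - α x) * (1 / α x) =
        (Fintype.card V : ℚ) * (1 / α x) - 1 := by
      intro x
      have h := (hαpos x).ne'
      field_simp
    rw [Finset.sum_congr rfl (fun x _ => this x), Finset.sum_sub_distrib,
      ← Finset.mul_sum]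
    rw [show (∑ x : V, (1:ℚ) / α x) = Nat.card G.ConnectedComponent from
      sum_inv_vertex G]
    rw [Finset.sum_const, Finset.card_univ, nsmul_eq_mul, mul_one]
  have hswap : ∑ p ∈ Finset.univ.filter (fun p : V × V => ¬G.Reachable p.1 p.2),
      (1 : ℚ) / α p.2 =
      ∑ p ∈ Finset.univ.filter (fun p : V × V => ¬G.Reachable p.1 p.2),
      (1 : ℚ) / α p.1 := by
    apply Finset.sum_nbij' (fun p => (p.2, p.1)) (fun p => (p.2, p.1))
    · intro p hp
      rw [Finset.mem_filter] at hp ⊢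
      exact ⟨Finset.mem_univ _, fun h => hp.2 h.symm⟩
    · intro p hp
      rw [Finset.mem_filter] at hp ⊢
      exact ⟨Finset.mem_univ _, fun h => hp.2 h.symm⟩
    · intro p _; rfl
    · intro p _; rfl
    · intro p _; rfl
  rw [Finset.sum_add_distrib, hswap, hsum1]
  ring

end Sums

section Main

open scoped Classical

lemma main_aux [Fintype V] : ∀ (m : ℕ) (F : SimpleGraph V), F.IsAcyclic →
    Nat.card F.ConnectedComponent = m + 1 →
    (Nat.card {T : SimpleGraph V // F ≤ T ∧ T.IsTree} : ℚ) =
      (∏ᶠ c : F.ConnectedComponent, (Nat.card c.supp : ℚ)) *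
        (Fintype.card V : ℚ) ^ ((m : ℤ) - 1) := by
  intro m
  induction m with
  | zero =>
    intro F hF hk
    have h1 := Nat.card_eq_one_iff_unique.mp hk
    haveI hs : Subsingleton F.ConnectedComponent := h1.1
    have hVne : Nonempty V := by
      obtain ⟨c⟩ := h1.2
      obtain ⟨x, -⟩ := c.exists_rep
      exact ⟨x⟩
    have hpre : F.Preconnected := fun x y =>
      ConnectedComponent.eq.mp (Subsingleton.elim _ _)
    have htree : F.IsTree := ⟨⟨hpre⟩, hF⟩
    have hN : Nat.card {T : SimpleGraph V // F ≤ T ∧ T.IsTree} = 1 := by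
      rw [Nat.card_eq_one_iff_unique]
      refine ⟨⟨?_⟩, ⟨⟨F, le_refl F, htree⟩⟩⟩
      rintro ⟨T1, h11, h12⟩ ⟨T2, h21, h22⟩
      have e1 : T1 = F := tree_eq_of_le h11 htree h12
      have e2 : T2 = F := tree_eq_of_le h21 htree h22
      exact Subtype.ext (e1.trans e2.symm)
    letI : Fintype F.ConnectedComponent := Fintype.ofFinite _
    obtain ⟨c₀⟩ := h1.2
    have hsupp : c₀.supp = Set.univ := by
      ext x
      simp only [ConnectedComponent.mem_supp_iff, Set.mem_univ, iff_true]
      exact Subsingleton.elim _ _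
    have hprod : (∏ᶠ c : F.ConnectedComponent, (Nat.card c.supp : ℚ)) =
        (Fintype.card V : ℚ) := by
      rw [finprod_eq_prod_of_fintype, Fintype.prod_subsingleton _ c₀, hsupp,
        Nat.card_coe_set_eq, Set.ncard_univ, Nat.card_eq_fintype_card]
    have hn0 : (Fintype.card V : ℚ) ≠ 0 := by
      have : 0 < Fintype.card V := Fintype.card_pos
      exact_mod_cast this.ne'
    rw [hN, hprod, Nat.cast_one]
    rw [show ((0 : ℕ) : ℤ) - 1 = -1 from rfl, zpow_neg, zpow_one,
      mul_inv_cancel₀ hn0]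
  | succ m ih =>
    intro F hF hk
    have hVne : Nonempty V := by
      have h1 : 0 < Nat.card F.ConnectedComponent := by omega
      have h2 : Nonempty F.ConnectedComponent := (Nat.card_pos_iff.mp h1).1
      obtain ⟨c⟩ := h2
      obtain ⟨x, -⟩ := c.exists_rep
      exact ⟨x⟩
    have hn0 : (Fintype.card V : ℚ) ≠ 0 := by
      have : 0 < Fintype.card V := Fintype.card_pos
      exact_mod_cast this.ne'
    set P := ∏ᶠ c : F.ConnectedComponent, (Nat.card c.supp : ℚ) with hP
    set N := Nat.card {T : SimpleGraph V // F ≤ T ∧ T.IsTree} with hN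
    set S := Finset.univ.filter (fun p : V × V => ¬F.Reachable p.1 p.2) with hS
    have key : ∀ (A B : ℚ), A ≠ 0 → B ≠ 0 →
        P * (A + B) / (A * B) * (Fintype.card V : ℚ) ^ ((m : ℤ) - 1) =
        P * (Fintype.card V : ℚ) ^ ((m : ℤ) - 1) * (1 / A + 1 / B) := by
      intro A B hA hB
      field_simp
      ring
    have hterm : ∀ p ∈ S,
        (Nat.card {T : SimpleGraph V // F ⊔ edge p.1 p.2 ≤ T ∧ T.IsTree} : ℚ)
        = P * (Fintype.card V : ℚ) ^ ((m : ℤ) - 1) *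
          ((1 : ℚ) / (Nat.card (F.connectedComponentMk p.1).supp)
            + (1 : ℚ) / (Nat.card (F.connectedComponentMk p.2).supp)) := by
      rintro ⟨a, b⟩ hp
      rw [hS, Finset.mem_filter] at hp
      have hno : ¬F.Reachable a b := hp.2
      have hF' := acyclic_sup_edge hF hno
      have hk' : Nat.card (F ⊔ edge a b).ConnectedComponent = m + 1 := by
        have := card_cc_sup_edge hno
        omega
      have hih := ih (F ⊔ edge a b) hF' hk'
      have hau : ((Nat.card (F.connectedComponentMk a).supp : ℚ)) ≠ 0 := by
        exact_mod_cast (supp_card_pos _).ne'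
      have hbv : ((Nat.card (F.connectedComponentMk b).supp : ℚ)) ≠ 0 := by
        exact_mod_cast (supp_card_pos _).ne'
      have hprod := prod_cc_sup_edge hno
      have hP' : (∏ᶠ d : (F ⊔ edge a b).ConnectedComponent, (Nat.card d.supp : ℚ))
          = P * ((Nat.card (F.connectedComponentMk a).supp : ℚ) +
              (Nat.card (F.connectedComponentMk b).supp : ℚ)) /
            ((Nat.card (F.connectedComponentMk a).supp : ℚ) *
              (Nat.card (F.connectedComponentMk b).supp : ℚ)) := by
        rw [eq_div_iff (mul_ne_zero hau hbv)]
        exact hprod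
      rw [hih, hP']
      exact key _ _ hau hbv
    have hdc := double_count hF
    rw [hk] at hdc
    have hdcQ : (∑ p ∈ S,
        (Nat.card {T : SimpleGraph V // F ⊔ edge p.1 p.2 ≤ T ∧ T.IsTree} : ℚ))
        + 2 * (N : ℚ) = 2 * ((m : ℚ) + 1 + 1) * N := by
      exact_mod_cast hdc
    have hsum : (∑ p ∈ S,
        (Nat.card {T : SimpleGraph V // F ⊔ edge p.1 p.2 ≤ T ∧ T.IsTree} : ℚ))
        = P * (Fintype.card V : ℚ) ^ ((m : ℤ) - 1) *
            (2 * (Fintype.card V : ℚ) * ((m : ℚ) + 1)) := by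
      rw [Finset.sum_congr rfl hterm, ← Finset.mul_sum]
      have hsi := sum_invs F
      rw [hk] at hsi
      rw [hS, hsi]
      push_cast
      ring
    rw [hsum] at hdcQ
    have h2 : (2 : ℚ) * ((m : ℚ) + 1) ≠ 0 := by positivity
    have hcancel : (2 * ((m : ℚ) + 1)) * (N : ℚ)
        = (2 * ((m : ℚ) + 1)) *
          (P * (Fintype.card V : ℚ) ^ ((m : ℤ) - 1) * (Fintype.card V : ℚ)) := by
      linear_combination -hdcQ
    have hfin := mul_left_cancel₀ h2 hcancel
    rw [hfin]
    have hpow : (Fintype.card V : ℚ) ^ ((m : ℤ) - 1) * (Fintype.card V : ℚ)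
        = (Fintype.card V : ℚ) ^ (((m + 1 : ℕ) : ℤ) - 1) := by
      rw [show (((m + 1 : ℕ) : ℤ)) - 1 = (m : ℤ) - 1 + 1 by push_cast; ring,
        zpow_add₀ hn0, zpow_one]
    rw [mul_assoc, hpow]

end Main

/-- For `n ≥ 2` and a spanning forest `F` on the vertex set `Fin n`
(an acyclic graph on all `n` vertices, isolated vertices allowed), the number of
spanning trees of the complete graph `K_n` containing `F` as a subgraph equals
`(n₁ ⋯ n_k) · n^(k-2)`, where `n₁, …, n_k` are the sizes of the connected components
of `F` and `k` is the number of components (the formula being read in `ℚ`,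
with `n^(k-2)` an integer power). -/
theorem forest_extension_count (n : ℕ) (hn : 2 ≤ n)
    (F : SimpleGraph (Fin n)) (hF : F.IsAcyclic) :
    (Nat.card {T : SimpleGraph (Fin n) // F ≤ T ∧ T.IsTree} : ℚ) =
      (∏ᶠ c : F.ConnectedComponent, (Nat.card c.supp : ℚ)) *
        (n : ℚ) ^ ((Nat.card F.ConnectedComponent : ℤ) - 2) := by
  haveI : NeZero n := ⟨by omega⟩
  have hpos : 0 < Nat.card F.ConnectedComponent := by
    haveI : Nonempty F.ConnectedComponent := ⟨F.connectedComponentMk ⟨0, by omega⟩⟩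
    exact Nat.card_pos
  obtain ⟨m, hm⟩ : ∃ m, Nat.card F.ConnectedComponent = m + 1 :=
    ⟨Nat.card F.ConnectedComponent - 1, by omega⟩
  have h := main_aux m F hF hm
  rw [Fintype.card_fin] at h
  rw [h, hm]
  congr 1
  push_cast
  ring
end

section
/- Let n ≥ 3 and let e, f be two distinct edges of the complete graph K_n that share exactly one endpoint. The number of spanning trees of K_n containing both e and f equals 3·n^{n−4}; equivalently, the probability that a uniformly random spanning tree contains both e and f equals 3/n². -/
open Relation Finset

namespace CherryProof

open scoped Classical

set_option linter.unusedSectionVars false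

variable {V : Type} [Fintype V] [DecidableEq V]

/-- The step relation of a parent map: `x` points to `y`. -/
def pstep (q : V → Option V) : V → V → Prop := fun x y => q x = some y

/-- A parent map is a forest iff it has no cycles. -/
def IsPForest (q : V → Option V) : Prop := ∀ v, ¬ TransGen (pstep q) v v

/-- Roots: vertices with no parent. -/
def rootsF (q : V → Option V) : Finset V := Finset.univ.filter (fun v => q v = none)

/-- `p` is a submap of `q`. -/
def subF (p q : V → Option V) : Prop := ∀ x y, p x = some y → q x = some y

lemma subF_refl (p : V → Option V) : subF p p := fun _ _ h => h

lemma subF_trans {p q r : V → Option V} (h1 : subF p q) (h2 : subF q r) : subF p r :=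
  fun x y hxy => h2 x y (h1 x y hxy)

lemma rtg_mono {p q : V → Option V} (h : subF p q) {x y : V}
    (hxy : ReflTransGen (pstep p) x y) : ReflTransGen (pstep q) x y :=
  ReflTransGen.mono (fun a b hab => h a b hab) _ _ hxy

lemma tg_mono {p q : V → Option V} (h : subF p q) {x y : V}
    (hxy : TransGen (pstep p) x y) : TransGen (pstep q) x y :=
  TransGen.mono (fun a b hab => h a b hab) _ _ hxy

/-- number of strict ancestors -/
noncomputable def ancCard (p : V → Option V) (v : V) : ℕ :=
  (Finset.univ.filter (fun w => TransGen (pstep p) v w)).card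

lemma ancCard_lt {p : V → Option V} (hf : IsPForest p) {x y : V} (h : p x = some y) :
    ancCard p y < ancCard p x := by
  apply Finset.card_lt_card
  constructor
  · intro w hw
    simp only [Finset.mem_filter, Finset.mem_univ, true_and] at hw ⊢
    exact TransGen.head h hw
  · intro hsub
    have hy : y ∈ Finset.univ.filter (fun w => TransGen (pstep p) x w) := by
      simp only [Finset.mem_filter, Finset.mem_univ, true_and]
      exact TransGen.single h
    have := hsub hy
    simp only [Finset.mem_filter, Finset.mem_univ, true_and] at this
    exact hf y this

lemma exists_root {p : V → Option V} (hf : IsPForest p) (v : V) :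
    ∃ r, ReflTransGen (pstep p) v r ∧ p r = none := by
  generalize hn : ancCard p v = n
  induction n using Nat.strong_induction_on generalizing v with
  | _ n ih =>
    cases hv : p v with
    | none => exact ⟨v, ReflTransGen.refl, hv⟩
    | some w =>
      obtain ⟨r, hr, h0⟩ := ih _ (hn ▸ ancCard_lt hf hv) w rfl
      exact ⟨r, ReflTransGen.head hv hr, h0⟩

lemma reach_absorb {p : V → Option V} {r x : V} (hroot : p r = none)
    (h : ReflTransGen (pstep p) r x) : x = r := by
  rcases h.cases_head with h | ⟨c, hc, _⟩
  · exact h.symm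
  · exact absurd hc (by simp [pstep, hroot])

lemma reach_det {p : V → Option V} {r₁ : V} (hroot : p r₁ = none) :
    ∀ {v r₂ : V}, ReflTransGen (pstep p) v r₁ → ReflTransGen (pstep p) v r₂ →
      ReflTransGen (pstep p) r₂ r₁ := by
  intro v r₂ h1
  induction h1 using ReflTransGen.head_induction_on with
  | refl => intro h2; rw [reach_absorb hroot h2]
  | head hstep htail ih =>
    rename_i x c
    intro h2
    rcases h2.cases_head with h | ⟨c', hc', h2'⟩
    · subst h; exact ReflTransGen.head hstep htail
    · have : c' = c := by
        simp only [pstep] at hstep hc'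
        rw [hstep] at hc'; exact (Option.some_injective _ hc').symm
      subst this
      exact ih h2'

lemma root_unique {p : V → Option V} {v r₁ r₂ : V}
    (h1 : ReflTransGen (pstep p) v r₁) (hr1 : p r₁ = none)
    (h2 : ReflTransGen (pstep p) v r₂) (hr2 : p r₂ = none) : r₁ = r₂ :=
  reach_absorb hr2 (reach_det hr1 h1 h2)

/-- The set of 1-rooted forests extending `p`. -/
noncomputable def treesOver (p : V → Option V) : Finset (V → Option V) :=
  Finset.univ.filter (fun q => IsPForest q ∧ subF p q ∧ (rootsF q).card = 1)

/-- Valid Pitman moves from forest `p`. -/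
noncomputable def moves (p : V → Option V) : Finset (V × V) :=
  Finset.univ.filter (fun m => p m.1 = none ∧ ¬ ReflTransGen (pstep p) m.2 m.1)

lemma card_moves {p : V → Option V} (hf : IsPForest p) :
    (moves p).card = Fintype.card V * ((rootsF p).card - 1) := by
  have key : ∀ v : V, ((rootsF p).filter (fun u => ¬ ReflTransGen (pstep p) v u)).card
      = (rootsF p).card - 1 := by
    intro v
    have h1 : ((rootsF p).filter (fun u => ReflTransGen (pstep p) v u)).card = 1 := by
      rw [Finset.card_eq_one]
      obtain ⟨r, hr, hroot⟩ := exists_root hf v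
      refine ⟨r, ?_⟩
      ext u
      simp only [Finset.mem_filter, rootsF, Finset.mem_univ, true_and, Finset.mem_singleton]
      constructor
      · rintro ⟨hu, hvu⟩; exact (root_unique hvu hu hr hroot)
      · rintro rfl; exact ⟨hroot, hr⟩
    have h2 := Finset.card_filter_add_card_filter_not
      (s := rootsF p) (p := (fun u => ReflTransGen (pstep p) v u))
    omega
  have : moves p = (Finset.univ : Finset V).biUnion
      (fun v => ((rootsF p).filter (fun u => ¬ ReflTransGen (pstep p) v u)).image
        (fun u => (u, v))) := by
    ext ⟨u, v⟩
    constructor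
    · intro hm
      rw [moves, Finset.mem_filter] at hm
      obtain ⟨-, h1, h2⟩ := hm
      refine Finset.mem_biUnion.mpr ⟨v, Finset.mem_univ v, Finset.mem_image.mpr ⟨u, ?_, rfl⟩⟩
      rw [Finset.mem_filter]
      refine ⟨?_, h2⟩
      rw [rootsF, Finset.mem_filter]
      exact ⟨Finset.mem_univ u, h1⟩
    · intro hm
      obtain ⟨v', -, hm⟩ := Finset.mem_biUnion.mp hm
      obtain ⟨u', hu', heq⟩ := Finset.mem_image.mp hm
      rw [Prod.ext_iff] at heq
      obtain ⟨rfl, rfl⟩ := heq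
      rw [Finset.mem_filter, rootsF, Finset.mem_filter] at hu'
      rw [moves, Finset.mem_filter]
      exact ⟨Finset.mem_univ _, hu'.1.2, hu'.2⟩
  rw [this, Finset.card_biUnion]
  · rw [Finset.sum_congr rfl (fun v _ => by
      rw [Finset.card_image_of_injective _ (fun a b hab => (Prod.mk.injEq .. ▸ hab).1), key v])]
    simp [Finset.sum_const, mul_comm]
  · intro x _ y _ hxy
    simp only [Finset.disjoint_left, Finset.mem_image]
    rintro ⟨u, v⟩ h1 h2
    obtain ⟨u1, -, h1⟩ := h1
    obtain ⟨u2, -, h2⟩ := h2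
    rw [Prod.ext_iff] at h1 h2
    exact hxy (h1.2.trans h2.2.symm)


section Moves

variable {p : V → Option V}

lemma subF_update {u v : V} (hu : p u = none) :
    subF p (Function.update p u (some v)) := by
  intro x y hxy
  rcases eq_or_ne x u with rfl | hne
  · rw [hu] at hxy; exact absurd hxy (by simp)
  · rwa [Function.update_of_ne hne]

lemma update_forest (hf : IsPForest p) {u v : V} (hu : p u = none)
    (hv : ¬ ReflTransGen (pstep p) v u) :
    IsPForest (Function.update p u (some v)) := by
  set p' := Function.update p u (some v) with hp'
  have hstep' : ∀ {x y : V}, pstep p' x y → (x = u ∧ y = v) ∨ pstep p x y := by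
    intro x y hxy
    rcases eq_or_ne x u with rfl | hne
    · left
      refine ⟨rfl, ?_⟩
      rw [pstep, hp', Function.update_self] at hxy
      exact (Option.some_injective _ hxy).symm
    · right; rwa [pstep, hp', Function.update_of_ne hne] at hxy
  have B' : ∀ {x y : V}, ReflTransGen (pstep p') x y →
      ReflTransGen (pstep p) x y ∨
        (ReflTransGen (pstep p) x u ∧ ReflTransGen (pstep p') v y) := by
    intro x y hxy
    induction hxy using ReflTransGen.head_induction_on with
    | refl => exact Or.inl ReflTransGen.refl
    | head hstep htail ih =>
      rcases hstep' hstep with ⟨rfl, rfl⟩ | hs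
      · exact Or.inr ⟨ReflTransGen.refl, htail⟩
      · rcases ih with h | ⟨h1, h2⟩
        · exact Or.inl (ReflTransGen.head hs h)
        · exact Or.inr ⟨ReflTransGen.head hs h1, h2⟩
  have hvu' : ∀ {z : V}, ReflTransGen (pstep p') z u → ReflTransGen (pstep p) z u := by
    intro z hz
    rcases B' hz with h | ⟨h, -⟩ <;> exact h
  intro w hw
  obtain ⟨z, hwz, hzw⟩ : ∃ z, pstep p' w z ∧ ReflTransGen (pstep p') z w := by
    exact (Relation.TransGen.head'_iff).mp hw
  rcases eq_or_ne w u with rfl | hwu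
  · have hz : z = v := by
      rcases hstep' hwz with ⟨-, rfl⟩ | hs
      · rfl
      · exact absurd hs (by simp [pstep, hu])
    subst hz
    exact hv (hvu' hzw)
  · have hwz' : pstep p w z := by
      rcases hstep' hwz with ⟨rfl, -⟩ | h
      · exact absurd rfl hwu
      · exact h
    rcases B' hzw with h | ⟨h1, h2⟩
    · exact hf w (TransGen.head' hwz' h)
    · have : ReflTransGen (pstep p') v u :=
        h2.trans (ReflTransGen.head hwz (rtg_mono (subF_update hu) h1))
      exact hv (hvu' this)

lemma rootsF_update {u v : V} (hu : p u = none) :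
    rootsF (Function.update p u (some v)) = (rootsF p).erase u := by
  ext x
  rw [rootsF, Finset.mem_filter, Finset.mem_erase, rootsF, Finset.mem_filter]
  rcases eq_or_ne x u with rfl | hne
  · simp
  · simp [Function.update_of_ne hne, hne]

lemma treesOver_update {u v : V} (hu : p u = none) :
    treesOver (Function.update p u (some v)) =
      (treesOver p).filter (fun q => subF (Function.update p u (some v)) q) := by
  ext q
  simp only [treesOver, Finset.mem_filter, Finset.mem_univ, true_and]
  constructor
  · rintro ⟨h1, h2, h3⟩; exact ⟨⟨h1, subF_trans (subF_update hu) h2, h3⟩, h2⟩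
  · rintro ⟨⟨h1, -, h3⟩, h2⟩; exact ⟨h1, h2, h3⟩

lemma roots_subset_of_treesOver {q : V → Option V} (hpq : subF p q) :
    rootsF q ⊆ rootsF p := by
  intro x hx
  rw [rootsF, Finset.mem_filter] at hx ⊢
  refine ⟨Finset.mem_univ x, ?_⟩
  cases hpx : p x with
  | none => rfl
  | some y => rw [hpq x y hpx] at hx; exact absurd hx.2 (by simp)

lemma card_moves_sub (hf : IsPForest p) {q : V → Option V} (hq : q ∈ treesOver p) :
    ((moves p).filter (fun m => subF (Function.update p m.1 (some m.2)) q)).card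
      = (rootsF p).card - 1 := by
  rw [treesOver, Finset.mem_filter] at hq
  obtain ⟨-, hqf, hpq, hq1⟩ := hq
  have hsub : rootsF q ⊆ rootsF p := roots_subset_of_treesOver hpq
  have hbij : ((moves p).filter (fun m => subF (Function.update p m.1 (some m.2)) q)).card
      = (rootsF p \ rootsF q).card := by
    apply Finset.card_bij (fun m _ => m.1)
    · rintro ⟨x, y⟩ hm
      rw [Finset.mem_filter, moves, Finset.mem_filter] at hm
      obtain ⟨⟨-, h1, h2⟩, h3⟩ := hm
      have hqx : q x = some y := h3 x y (by simp)
      rw [Finset.mem_sdiff, rootsF, Finset.mem_filter, rootsF, Finset.mem_filter]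
      exact ⟨⟨Finset.mem_univ x, h1⟩, by simp [hqx]⟩
    · rintro ⟨x, y⟩ hm ⟨x', y'⟩ hm' (h : x = x')
      subst h
      rw [Finset.mem_filter] at hm hm'
      have h1 : q x = some y := hm.2 x y (by simp)
      have h2 : q x = some y' := hm'.2 x y' (by simp)
      rw [h1] at h2
      exact Prod.ext rfl (Option.some_injective _ h2)
    · intro x hx
      rw [Finset.mem_sdiff, rootsF, Finset.mem_filter, rootsF, Finset.mem_filter] at hx
      obtain ⟨⟨-, hpx⟩, hqx⟩ := hx
      cases hqv : q x with
      | none => exact absurd ⟨Finset.mem_univ x, hqv⟩ hqx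
      | some y =>
        have hmem : (x, y) ∈ (moves p).filter
            (fun m => subF (Function.update p m.1 (some m.2)) q) := by
          rw [Finset.mem_filter, moves, Finset.mem_filter]
          refine ⟨⟨Finset.mem_univ _, hpx, ?_⟩, ?_⟩
          · intro hyx
            exact hqf x (TransGen.head' hqv (rtg_mono hpq hyx))
          · intro z w hzw
            rcases eq_or_ne z x with rfl | hne
            · rw [Function.update_self] at hzw
              rw [← Option.some_injective _ hzw]
              exact hqv
            · rw [Function.update_of_ne hne] at hzw
              exact hpq z w hzw
        exact ⟨(x, y), hmem, rfl⟩
  rw [hbij, Finset.card_sdiff_of_subset hsub, hq1]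

lemma sum_double (hf : IsPForest p) :
    ∑ m ∈ moves p, (treesOver (Function.update p m.1 (some m.2))).card
      = ((rootsF p).card - 1) * (treesOver p).card := by
  have h1 : ∀ m ∈ moves p, (treesOver (Function.update p m.1 (some m.2))).card
      = ((treesOver p).filter (fun q => subF (Function.update p m.1 (some m.2)) q)).card := by
    intro m hm
    rw [moves, Finset.mem_filter] at hm
    rw [treesOver_update hm.2.1]
  rw [Finset.sum_congr rfl h1]
  have swap : ∑ m ∈ moves p,
        ((treesOver p).filter (fun q => subF (Function.update p m.1 (some m.2)) q)).card
      = ∑ q ∈ treesOver p,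
        ((moves p).filter (fun m => subF (Function.update p m.1 (some m.2)) q)).card := by
    simp_rw [Finset.card_filter]
    rw [Finset.sum_comm]
  rw [swap, Finset.sum_congr rfl (fun q hq => card_moves_sub hf hq), Finset.sum_const,
    smul_eq_mul, mul_comm]

theorem card_treesOver [Nonempty V] : ∀ (j : ℕ) (p : V → Option V), IsPForest p →
    (rootsF p).card = j → (treesOver p).card = Fintype.card V ^ (j - 1) := by
  intro j
  induction j using Nat.strong_induction_on with
  | _ j ih =>
    intro p hf hj
    match j, hj with
    | 0, hj =>
      obtain ⟨r, -, hr⟩ := exists_root hf (Classical.arbitrary V)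
      have hmem : r ∈ rootsF p := by
        rw [rootsF, Finset.mem_filter]; exact ⟨Finset.mem_univ r, hr⟩
      rw [Finset.card_eq_zero.mp hj] at hmem
      exact absurd hmem (Finset.notMem_empty r)
    | 1, hj =>
      have hp : p ∈ treesOver p := by
        rw [treesOver, Finset.mem_filter]; exact ⟨Finset.mem_univ p, hf, subF_refl p, hj⟩
      have hsingle : treesOver p = {p} := by
        apply Finset.eq_singleton_iff_unique_mem.mpr
        refine ⟨hp, ?_⟩
        intro q hq
        rw [treesOver, Finset.mem_filter] at hq
        obtain ⟨-, hqf, hpq, hq1⟩ := hq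
        have hsub : rootsF q ⊆ rootsF p := roots_subset_of_treesOver hpq
        have heq : rootsF q = rootsF p :=
          Finset.eq_of_subset_of_card_le hsub (by rw [hq1, hj])
        funext x
        cases hx : p x with
        | some y => rw [hpq x y hx]
        | none =>
          have hxq : x ∈ rootsF q := by
            rw [heq, rootsF, Finset.mem_filter]; exact ⟨Finset.mem_univ x, hx⟩
          rw [rootsF, Finset.mem_filter] at hxq
          rw [hxq.2]
      rw [hsingle]
      simp
    | (j+2), hj =>
      have key := sum_double (p := p) hf
      have hterm : ∀ m ∈ moves p, (treesOver (Function.update p m.1 (some m.2))).card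
          = Fintype.card V ^ j := by
        intro m hm
        rw [moves, Finset.mem_filter] at hm
        obtain ⟨-, h1, h2⟩ := hm
        have hfor := update_forest hf h1 h2
        have hroots : (rootsF (Function.update p m.1 (some m.2))).card = j + 1 := by
          rw [rootsF_update h1, Finset.card_erase_of_mem
            (by rw [rootsF, Finset.mem_filter]; exact ⟨Finset.mem_univ _, h1⟩), hj]
          omega
        have := ih (j+1) (by omega) _ hfor hroots
        simpa using this
      rw [Finset.sum_congr rfl hterm, Finset.sum_const, smul_eq_mul, card_moves hf, hj] at key
      rw [show j + 2 - 1 = j + 1 from rfl] at key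
      have hkey2 : (j + 1) * (Fintype.card V ^ (j + 1)) = (j + 1) * (treesOver p).card := by
        calc (j + 1) * (Fintype.card V ^ (j + 1))
            = Fintype.card V * (j + 1) * Fintype.card V ^ j := by rw [pow_succ]; ring
          _ = (j + 1) * (treesOver p).card := key
      have hfin := Nat.eq_of_mul_eq_mul_left (by omega : 0 < j + 1) hkey2
      rw [← hfin]
      norm_num

end Moves


section Graph

open SimpleGraph

variable {q : V → Option V}

/-- The undirected graph of a parent map. -/
def graphOf (q : V → Option V) : SimpleGraph V where
  Adj x y := x ≠ y ∧ (q x = some y ∨ q y = some x)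
  symm := by
    refine ⟨fun x y ⟨h1, h2⟩ => ?_⟩
    exact ⟨h1.symm, h2.symm⟩
  loopless := by refine ⟨fun x ⟨h1, _⟩ => ?_⟩; exact h1 rfl

lemma forest_of_measure {p : V → Option V} (f : V → ℕ)
    (h : ∀ x y, p x = some y → f y < f x) : IsPForest p := by
  have key : ∀ x y, TransGen (pstep p) x y → f y < f x := by
    intro x y hxy
    induction hxy with
    | single h1 => exact h _ _ h1
    | tail _ h1 ih => exact lt_trans (h _ _ h1) ih
  intro v hv
  exact lt_irrefl _ (key v v hv)

lemma getVert_eq_support_get {G : SimpleGraph V} {u v : V} (p : G.Walk u v) :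
    ∀ (i : ℕ) (h : i < p.support.length), p.getVert i = p.support[i]'h := by
  induction p with
  | nil =>
    intro i h
    simp only [SimpleGraph.Walk.support_nil, List.length_singleton] at h
    interval_cases i
    rfl
  | cons hadj pw ih =>
    intro i h
    cases i with
    | zero => rfl
    | succ i =>
      rw [SimpleGraph.Walk.getVert_cons_succ]
      have h' : i < pw.support.length := by
        simp only [SimpleGraph.Walk.support_cons, List.length_cons] at h; omega
      rw [ih i h']
      rfl

lemma getVert_mem_support {G : SimpleGraph V} {u v : V} (p : G.Walk u v) (i : ℕ) :
    p.getVert i ∈ p.support := by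
  by_cases h : i < p.support.length
  · rw [getVert_eq_support_get p i h]
    exact List.getElem_mem h
  · rw [SimpleGraph.Walk.length_support] at h
    rw [SimpleGraph.Walk.getVert_of_length_le p (by omega)]
    exact SimpleGraph.Walk.end_mem_support p

lemma graphOf_acyclic (hf : IsPForest q) : (graphOf q).IsAcyclic := by
  intro v₀ c hc
  obtain ⟨u, humem, hmax⟩ := Finset.exists_max_image c.support.toFinset (ancCard q)
    ⟨v₀, by simp [SimpleGraph.Walk.start_mem_support]⟩
  rw [List.mem_toFinset] at humem
  have hmax' : ∀ x ∈ c.support, ancCard q x ≤ ancCard q u := by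
    intro x hx; exact hmax x (List.mem_toFinset.mpr hx)
  set c2 := c.rotate u humem with hc2def
  have hc2 : c2.IsCycle := hc.rotate humem
  have hmem2 : ∀ x ∈ c2.support, x ∈ c.support := by
    intro x hx
    rw [SimpleGraph.Walk.support_eq_cons] at hx
    rcases List.mem_cons.mp hx with rfl | hx
    · exact humem
    · have hperm := SimpleGraph.Walk.support_rotate c u humem
      have := hperm.perm.mem_iff.mp hx
      rw [SimpleGraph.Walk.support_eq_cons c]
      exact List.mem_cons_of_mem _ this
  have hlen : 3 ≤ c2.length := hc2.three_le_length
  set y := c2.getVert 1 with hy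
  set z := c2.getVert (c2.length - 1) with hz
  have hadj1 : (graphOf q).Adj u y := by
    have := c2.adj_getVert_succ (i := 0) (by omega)
    rwa [SimpleGraph.Walk.getVert_zero] at this
  have hadj2 : (graphOf q).Adj z u := by
    have := c2.adj_getVert_succ (i := c2.length - 1) (by omega)
    rwa [show c2.length - 1 + 1 = c2.length by omega, SimpleGraph.Walk.getVert_length] at this
  have hymem : y ∈ c2.support := getVert_mem_support c2 1
  have hzmem : z ∈ c2.support := getVert_mem_support c2 (c2.length - 1)
  have hqy : q u = some y := by
    rcases hadj1.2 with h | h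
    · exact h
    · exfalso
      have h1 := ancCard_lt hf h
      have h2 := hmax' y (hmem2 y hymem)
      omega
  have hqz : q u = some z := by
    rcases hadj2.2 with h | h
    · exfalso
      have h1 := ancCard_lt hf h
      have h2 := hmax' z (hmem2 z hzmem)
      omega
    · exact h
  have hyz : y = z := Option.some_injective _ (hqy ▸ hqz)
  -- contradiction with nodup of support tail
  have hnodup := hc2.support_nodup
  have hlensupp : c2.support.length = c2.length + 1 := SimpleGraph.Walk.length_support c2
  have hlentail : c2.support.tail.length = c2.length := by
    rw [List.length_tail, hlensupp]
    omega
  have hgetTail : ∀ (i : ℕ) (h : i < c2.support.tail.length),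
      c2.support.tail[i]'h = c2.getVert (i + 1) := by
    intro i h
    rw [getVert_eq_support_get c2 (i+1) (by rw [hlensupp]; rw [hlentail] at h; omega)]
    exact List.get_tail _ i h
  have h0 : c2.support.tail[0]'(by omega) = y := by rw [hgetTail]
  have h1 : c2.support.tail[c2.length - 2]'(by omega) = z := by
    rw [hgetTail, show c2.length - 2 + 1 = c2.length - 1 by omega]
  have heq2 : (0 : ℕ) = c2.length - 2 :=
    hnodup.getElem_inj_iff.mp (by rw [h0, h1, hyz])
  omega

lemma exists_good_path (hf : IsPForest q) {r : V} (hr : rootsF q = {r}) (v : V) :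
    ∃ pth : (graphOf q).Walk v r, pth.IsPath ∧
      (∀ x, x ∈ pth.support → ReflTransGen (pstep q) v x) ∧
      (∀ w, q v = some w → pth.getVert 1 = w) := by
  generalize hn : ancCard q v = n
  induction n using Nat.strong_induction_on generalizing v with
  | _ n ih =>
    cases hv : q v with
    | none =>
      have hvr : v = r := by
        have : v ∈ rootsF q := by rw [rootsF, Finset.mem_filter]; exact ⟨Finset.mem_univ v, hv⟩
        rw [hr, Finset.mem_singleton] at this
        exact this
      subst hvr
      refine ⟨SimpleGraph.Walk.nil, SimpleGraph.Walk.IsPath.nil, ?_, ?_⟩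
      · intro x hx
        rw [SimpleGraph.Walk.support_nil, List.mem_singleton] at hx
        subst hx; exact ReflTransGen.refl
      · intro w hw; exact absurd hw (by simp)
    | some w =>
      obtain ⟨pw, hpw, hsupp, -⟩ := ih _ (hn ▸ ancCard_lt hf hv) w rfl
      have hvw : (graphOf q).Adj v w := by
        refine ⟨?_, Or.inl hv⟩
        intro hveq
        exact hf v (TransGen.single (by rw [pstep, hv, hveq]))
      have hvmem : v ∉ pw.support := by
        intro hmem
        exact hf v (TransGen.head' hv (hsupp v hmem))
      refine ⟨SimpleGraph.Walk.cons hvw pw, hpw.cons hvmem, ?_, ?_⟩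
      · intro x hx
        rw [SimpleGraph.Walk.support_cons, List.mem_cons] at hx
        rcases hx with rfl | hx
        · exact ReflTransGen.refl
        · exact ReflTransGen.head hv (hsupp x hx)
      · intro w' hw'
        rw [SimpleGraph.Walk.getVert_cons_succ, SimpleGraph.Walk.getVert_zero]
        exact Option.some_injective _ hw'


lemma graphOf_isTree (hf : IsPForest q) {r : V} (hr : rootsF q = {r}) :
    (graphOf q).IsTree := by
  have : Nonempty V := ⟨r⟩
  constructor
  · exact SimpleGraph.Connected.mk (fun x y => by
      obtain ⟨px, hpx, -, -⟩ := exists_good_path hf hr x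
      obtain ⟨py, hpy, -, -⟩ := exists_good_path hf hr y
      exact px.reachable.trans py.reachable.symm)
  · exact graphOf_acyclic hf

end Graph


section Par

open SimpleGraph

variable {T : SimpleGraph V}

/-- The canonical path from `v` to `r` in a tree. -/
noncomputable def cpath (hT : T.IsTree) (v r : V) : T.Walk v r :=
  (hT.existsUnique_path v r).choose

lemma cpath_isPath (hT : T.IsTree) (v r : V) : (cpath hT v r).IsPath :=
  (hT.existsUnique_path v r).choose_spec.1

lemma cpath_unique (hT : T.IsTree) {v r : V} (p : T.Walk v r) (hp : p.IsPath) :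
    p = cpath hT v r :=
  (hT.existsUnique_path v r).choose_spec.2 p hp

/-- Parent map of a rooted tree. -/
noncomputable def par (hT : T.IsTree) (r : V) (v : V) : Option V :=
  if v = r then none else some ((cpath hT v r).getVert 1)

lemma par_eq_none_iff (hT : T.IsTree) {r v : V} : par hT r v = none ↔ v = r := by
  unfold par
  split <;> simp_all

lemma par_eq_some (hT : T.IsTree) {r v : V} (h : v ≠ r) :
    par hT r v = some ((cpath hT v r).getVert 1) := by
  unfold par
  simp [h]

lemma cpath_tail (hT : T.IsTree) {r v : V} (h : v ≠ r) :
    ((cpath hT v r).tail : T.Walk _ r) = cpath hT ((cpath hT v r).getVert 1) r := by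
  apply cpath_unique
  exact (cpath_isPath hT v r).tail

lemma par_length_lt (hT : T.IsTree) {r v w : V} (h : par hT r v = some w) :
    (cpath hT w r).length < (cpath hT v r).length := by
  by_cases hv : v = r
  · rw [hv] at h; rw [par_eq_none_iff hT |>.mpr rfl] at h; exact absurd h (by simp)
  · rw [par_eq_some hT hv] at h
    have hw : w = (cpath hT v r).getVert 1 := (Option.some_injective _ h).symm
    subst hw
    have h1 := cpath_tail hT hv
    have h2 := SimpleGraph.Walk.length_tail_add_one
      (p := cpath hT v r) (SimpleGraph.Walk.not_nil_of_ne hv)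
    rw [h1] at h2
    omega

lemma par_forest (hT : T.IsTree) (r : V) : IsPForest (par hT r) :=
  forest_of_measure (fun v => (cpath hT v r).length) (fun _ _ h => par_length_lt hT h)

lemma par_roots (hT : T.IsTree) (r : V) : rootsF (par hT r) = {r} := by
  ext x
  rw [rootsF, Finset.mem_filter, Finset.mem_singleton, par_eq_none_iff hT]
  simp

lemma graphOf_par (hT : T.IsTree) (r : V) : graphOf (par hT r) = T := by
  ext x y
  constructor
  · rintro ⟨hne, h | h⟩
    · by_cases hx : x = r
      · rw [hx, par_eq_none_iff hT |>.mpr rfl] at h; exact absurd h (by simp)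
      · rw [par_eq_some hT hx] at h
        have : y = (cpath hT x r).getVert 1 := (Option.some_injective _ h).symm
        subst this
        exact SimpleGraph.Walk.adj_snd (SimpleGraph.Walk.not_nil_of_ne hx)
    · by_cases hy : y = r
      · rw [hy, par_eq_none_iff hT |>.mpr rfl] at h; exact absurd h (by simp)
      · rw [par_eq_some hT hy] at h
        have : x = (cpath hT y r).getVert 1 := (Option.some_injective _ h).symm
        subst this
        exact (SimpleGraph.Walk.adj_snd (SimpleGraph.Walk.not_nil_of_ne hy)).symm
  · intro hadj
    refine ⟨hadj.ne, ?_⟩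
    by_cases hy : y = r
    · subst hy
      left
      rw [par_eq_some hT hadj.ne]
      have hpath : (SimpleGraph.Walk.cons hadj SimpleGraph.Walk.nil : T.Walk x y).IsPath := by
        rw [SimpleGraph.Walk.cons_isPath_iff]
        exact ⟨SimpleGraph.Walk.IsPath.nil, by simp [hadj.ne]⟩
      rw [← cpath_unique hT _ hpath]
      rfl
    · by_cases hx : x = r
      · subst hx
        right
        rw [par_eq_some hT hy]
        have hpath : (SimpleGraph.Walk.cons hadj.symm SimpleGraph.Walk.nil : T.Walk y x).IsPath := by
          rw [SimpleGraph.Walk.cons_isPath_iff]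
          exact ⟨SimpleGraph.Walk.IsPath.nil, by simp [hadj.ne']⟩
        rw [← cpath_unique hT _ hpath]
        rfl
      · by_cases hmem : y ∈ (cpath hT x r).support
        · left
          rw [par_eq_some hT hx]
          have htake : ((cpath hT x r).takeUntil y hmem) =
              SimpleGraph.Walk.cons hadj SimpleGraph.Walk.nil := by
            have h1 : ((cpath hT x r).takeUntil y hmem).IsPath :=
              (cpath_isPath hT x r).takeUntil hmem
            have h2 : (SimpleGraph.Walk.cons hadj SimpleGraph.Walk.nil : T.Walk x y).IsPath := by
              rw [SimpleGraph.Walk.cons_isPath_iff]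
              exact ⟨SimpleGraph.Walk.IsPath.nil, by simp [hadj.ne]⟩
            rw [cpath_unique hT _ h1, cpath_unique hT _ h2]
          have hspec := (cpath hT x r).take_spec hmem
          rw [htake] at hspec
          rw [← hspec]
          simp [SimpleGraph.Walk.cons_append, SimpleGraph.Walk.nil_append,
            SimpleGraph.Walk.getVert_cons_succ, SimpleGraph.Walk.getVert_zero]
        · right
          rw [par_eq_some hT hy]
          have hpath : (SimpleGraph.Walk.cons hadj.symm (cpath hT x r) : T.Walk y r).IsPath := by
            rw [SimpleGraph.Walk.cons_isPath_iff]
            exact ⟨cpath_isPath hT x r, hmem⟩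
          rw [← cpath_unique hT _ hpath]
          simp [SimpleGraph.Walk.getVert_cons_succ, SimpleGraph.Walk.getVert_zero]

lemma par_graphOf {q : V → Option V} (hf : IsPForest q) {r : V} (hr : rootsF q = {r}) :
    par (graphOf_isTree hf hr) r = q := by
  funext v
  by_cases hv : v = r
  · rw [hv]
    have h1 : par (graphOf_isTree hf hr) r r = none := (par_eq_none_iff _).mpr rfl
    have h2 : q r = none := by
      have hm : r ∈ rootsF q := by rw [hr]; exact Finset.mem_singleton_self r
      rw [rootsF, Finset.mem_filter] at hm
      exact hm.2
    rw [h1, h2]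
  · obtain ⟨pth, hpth, -, hsnd⟩ := exists_good_path hf hr v
    cases hqv : q v with
    | none =>
      exfalso
      apply hv
      have : v ∈ rootsF q := by
        rw [rootsF, Finset.mem_filter]; exact ⟨Finset.mem_univ v, hqv⟩
      rw [hr, Finset.mem_singleton] at this
      exact this
    | some w =>
      rw [par_eq_some _ hv, ← cpath_unique _ pth hpth, hsnd w hqv]

end Par


section Equivalence

open SimpleGraph

noncomputable def theRoot (q : V → Option V) (h : (rootsF q).card = 1) : V :=
  (Finset.card_eq_one.mp h).choose

lemma theRoot_spec (q : V → Option V) (h : (rootsF q).card = 1) :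
    rootsF q = {theRoot q h} :=
  (Finset.card_eq_one.mp h).choose_spec

/-- The key equivalence: 1-rooted forests are rooted trees. -/
noncomputable def forestTreeEquiv :
    {q : V → Option V // IsPForest q ∧ (rootsF q).card = 1}
      ≃ {T : SimpleGraph V // T.IsTree} × V where
  toFun x := (⟨graphOf x.1, graphOf_isTree x.2.1 (theRoot_spec x.1 x.2.2)⟩,
    theRoot x.1 x.2.2)
  invFun y := ⟨par y.1.2 y.2, par_forest y.1.2 y.2, by rw [par_roots]; simp⟩
  left_inv x := by
    apply Subtype.ext
    exact par_graphOf x.2.1 (theRoot_spec x.1 x.2.2)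
  right_inv y := by
    have h1 : graphOf (par y.1.2 y.2) = y.1.1 := graphOf_par y.1.2 y.2
    have h2 : ∀ (hh : (rootsF (par y.1.2 y.2)).card = 1),
        theRoot (par y.1.2 y.2) hh = y.2 := by
      intro hh
      have hs := theRoot_spec (par y.1.2 y.2) hh
      rw [par_roots] at hs
      exact (Finset.singleton_injective hs).symm
    exact Prod.ext (Subtype.ext h1) (h2 (by rw [par_roots]; simp))

lemma nat_card_subtype_graph (P : SimpleGraph V → Prop) :
    Nat.card {q : V → Option V // (IsPForest q ∧ (rootsF q).card = 1) ∧ P (graphOf q)}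
      = Nat.card {T : SimpleGraph V // T.IsTree ∧ P T} * Fintype.card V := by
  have e1 : {q : V → Option V // (IsPForest q ∧ (rootsF q).card = 1) ∧ P (graphOf q)}
      ≃ {x : {q : V → Option V // IsPForest q ∧ (rootsF q).card = 1} // P (graphOf x.1)} :=
    (Equiv.subtypeSubtypeEquivSubtypeInter _ _).symm
  have e2 : {x : {q : V → Option V // IsPForest q ∧ (rootsF q).card = 1} // P (graphOf x.1)}
      ≃ {y : {T : SimpleGraph V // T.IsTree} × V // P y.1.1} :=
    forestTreeEquiv.subtypeEquiv (fun x => Iff.rfl)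
  have e3 : {y : {T : SimpleGraph V // T.IsTree} × V // P y.1.1}
      ≃ {T' : {T : SimpleGraph V // T.IsTree} // P T'.1} × V :=
    { toFun := fun y => (⟨y.1.1, y.2⟩, y.1.2)
      invFun := fun z => ⟨(z.1.1, z.2), z.1.2⟩
      left_inv := fun y => rfl
      right_inv := fun z => rfl }
  have e4 : {T' : {T : SimpleGraph V // T.IsTree} // P T'.1}
      ≃ {T : SimpleGraph V // T.IsTree ∧ P T} :=
    Equiv.subtypeSubtypeEquivSubtypeInter _ _
  rw [Nat.card_congr (((e1.trans e2).trans e3).trans (Equiv.prodCongrLeft (fun _ => e4))),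
    Nat.card_prod, Nat.card_eq_fintype_card, Nat.card_eq_fintype_card]

lemma nat_card_eq_filter (Pred : (V → Option V) → Prop) :
    Nat.card {q : V → Option V // Pred q} = (Finset.univ.filter Pred).card := by
  rw [Nat.card_eq_fintype_card, Fintype.card_subtype]

end Equivalence

section Cherries

variable (a b c : V)

def cherry1 : V → Option V := fun v => if v = b then some a else if v = c then some a else none
def cherry2 : V → Option V := fun v => if v = a then some b else if v = c then some a else none
def cherry3 : V → Option V := fun v => if v = a then some c else if v = b then some a else none

variable {a b c : V}

lemma cherry1_forest (hab : a ≠ b) (hac : a ≠ c) (hbc : b ≠ c) : IsPForest (cherry1 a b c) := by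
  apply forest_of_measure (fun v => if v = a then 0 else 1)
  intro x y h
  unfold cherry1 at h
  split_ifs at h with h1 h2
  · obtain rfl : a = y := Option.some_injective _ h
    subst h1
    norm_num [hab, hac, hbc, Ne.symm hab, Ne.symm hac, Ne.symm hbc]
  · obtain rfl : a = y := Option.some_injective _ h
    subst h2
    norm_num [hab, hac, hbc, Ne.symm hab, Ne.symm hac, Ne.symm hbc]

lemma cherry2_forest (hab : a ≠ b) (hac : a ≠ c) (hbc : b ≠ c) : IsPForest (cherry2 a b c) := by
  apply forest_of_measure (fun v => if v = b then 0 else if v = a then 1 else 2)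
  intro x y h
  unfold cherry2 at h
  split_ifs at h with h1 h2
  · obtain rfl : b = y := Option.some_injective _ h
    subst h1
    norm_num [hab, hac, hbc, Ne.symm hab, Ne.symm hac, Ne.symm hbc]
  · obtain rfl : a = y := Option.some_injective _ h
    subst h2
    norm_num [hab, hac, hbc, Ne.symm hab, Ne.symm hac, Ne.symm hbc]

lemma cherry3_forest (hab : a ≠ b) (hac : a ≠ c) (hbc : b ≠ c) : IsPForest (cherry3 a b c) := by
  apply forest_of_measure (fun v => if v = c then 0 else if v = a then 1 else 2)
  intro x y h
  unfold cherry3 at h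
  split_ifs at h with h1 h2
  · obtain rfl : c = y := Option.some_injective _ h
    subst h1
    norm_num [hab, hac, hbc, Ne.symm hab, Ne.symm hac, Ne.symm hbc]
  · obtain rfl : a = y := Option.some_injective _ h
    subst h2
    norm_num [hab, hac, hbc, Ne.symm hab, Ne.symm hac, Ne.symm hbc]

lemma cherry1_roots : rootsF (cherry1 a b c) = ({b, c} : Finset V)ᶜ := by
  ext v
  rw [rootsF, Finset.mem_filter, Finset.mem_compl]
  simp only [Finset.mem_univ, true_and, Finset.mem_insert, Finset.mem_singleton]
  unfold cherry1
  split_ifs with h1 h2 <;> simp_all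

lemma cherry2_roots : rootsF (cherry2 a b c) = ({a, c} : Finset V)ᶜ := by
  ext v
  rw [rootsF, Finset.mem_filter, Finset.mem_compl]
  simp only [Finset.mem_univ, true_and, Finset.mem_insert, Finset.mem_singleton]
  unfold cherry2
  split_ifs with h1 h2 <;> simp_all

lemma cherry3_roots : rootsF (cherry3 a b c) = ({a, b} : Finset V)ᶜ := by
  ext v
  rw [rootsF, Finset.mem_filter, Finset.mem_compl]
  simp only [Finset.mem_univ, true_and, Finset.mem_insert, Finset.mem_singleton]
  unfold cherry3
  split_ifs with h1 h2 <;> simp_all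

variable {q : V → Option V}

lemma subF_cherry1_iff (hbc : b ≠ c) :
    subF (cherry1 a b c) q ↔ (q b = some a ∧ q c = some a) := by
  constructor
  · intro h
    exact ⟨h b a (by simp [cherry1]), h c a (by simp [cherry1, (Ne.symm hbc)])⟩
  · rintro ⟨h1, h2⟩ x y hxy
    unfold cherry1 at hxy
    split_ifs at hxy with hb hc
    · subst hb; rw [h1]; exact hxy
    · subst hc; rw [h2]; exact hxy

lemma subF_cherry2_iff (hac : a ≠ c) :
    subF (cherry2 a b c) q ↔ (q a = some b ∧ q c = some a) := by
  constructor
  · intro h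
    exact ⟨h a b (by simp [cherry2]), h c a (by simp [cherry2, (Ne.symm hac)])⟩
  · rintro ⟨h1, h2⟩ x y hxy
    unfold cherry2 at hxy
    split_ifs at hxy with hb hc
    · subst hb; rw [h1]; exact hxy
    · subst hc; rw [h2]; exact hxy

lemma subF_cherry3_iff (hab : a ≠ b) :
    subF (cherry3 a b c) q ↔ (q a = some c ∧ q b = some a) := by
  constructor
  · intro h
    exact ⟨h a c (by simp [cherry3]), h b a (by simp [cherry3, (Ne.symm hab)])⟩
  · rintro ⟨h1, h2⟩ x y hxy
    unfold cherry3 at hxy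
    split_ifs at hxy with hb hc
    · subst hb; rw [h1]; exact hxy
    · subst hc; rw [h2]; exact hxy

lemma adj_cherry_iff (hab : a ≠ b) (hac : a ≠ c) (hbc : b ≠ c) :
    ((graphOf q).Adj a b ∧ (graphOf q).Adj a c) ↔
      (subF (cherry1 a b c) q ∨ subF (cherry2 a b c) q ∨ subF (cherry3 a b c) q) := by
  rw [subF_cherry1_iff hbc, subF_cherry2_iff hac, subF_cherry3_iff hab]
  constructor
  · rintro ⟨⟨-, hb | hb⟩, ⟨-, hc | hc⟩⟩
    · rw [hb] at hc
      exact absurd (Option.some_injective _ hc) hbc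
    · exact Or.inr (Or.inl ⟨hb, hc⟩)
    · exact Or.inr (Or.inr ⟨hc, hb⟩)
    · exact Or.inl ⟨hb, hc⟩
  · rintro (⟨h1, h2⟩ | ⟨h1, h2⟩ | ⟨h1, h2⟩)
    · exact ⟨⟨hab, Or.inr h1⟩, ⟨hac, Or.inr h2⟩⟩
    · exact ⟨⟨hab, Or.inl h1⟩, ⟨hac, Or.inr h2⟩⟩
    · exact ⟨⟨hab, Or.inr h2⟩, ⟨hac, Or.inl h1⟩⟩

end Cherries


section Main

theorem main_count [Nonempty V] {a b c : V} (hab : a ≠ b) (hac : a ≠ c) (hbc : b ≠ c)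
    (h3 : 3 ≤ Fintype.card V) :
    Nat.card {T : SimpleGraph V // T.IsTree ∧ T.Adj a b ∧ T.Adj a c} * Fintype.card V
      = 3 * Fintype.card V ^ (Fintype.card V - 3) := by
  set N := Fintype.card V with hN
  have htree : ∀ (p : V → Option V), IsPForest p → (rootsF p).card = N - 2 →
      (treesOver p).card = N ^ (N - 3) := by
    intro p hf hr
    exact card_treesOver (N - 2) p hf hr
  have hcard2 : ∀ (x y : V), x ≠ y → ({x, y} : Finset V).card = 2 := by
    intro x y hxy
    rw [Finset.card_insert_of_notMem (by simp [hxy]), Finset.card_singleton]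
  have ht1 : (treesOver (cherry1 a b c)).card = N ^ (N - 3) :=
    htree _ (cherry1_forest hab hac hbc)
      (by rw [cherry1_roots, Finset.card_compl, hcard2 b c hbc])
  have ht2 : (treesOver (cherry2 a b c)).card = N ^ (N - 3) :=
    htree _ (cherry2_forest hab hac hbc)
      (by rw [cherry2_roots, Finset.card_compl, hcard2 a c hac])
  have ht3 : (treesOver (cherry3 a b c)).card = N ^ (N - 3) :=
    htree _ (cherry3_forest hab hac hbc)
      (by rw [cherry3_roots, Finset.card_compl, hcard2 a b hab])
  -- the big filter splits as a disjoint union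
  have hBsplit : (Finset.univ.filter (fun q : V → Option V =>
        (IsPForest q ∧ (rootsF q).card = 1) ∧ (graphOf q).Adj a b ∧ (graphOf q).Adj a c))
      = (treesOver (cherry1 a b c) ∪ treesOver (cherry2 a b c)) ∪ treesOver (cherry3 a b c) := by
    ext q
    rw [Finset.mem_filter, Finset.mem_union, Finset.mem_union]
    simp only [treesOver, Finset.mem_filter, Finset.mem_univ, true_and]
    constructor
    · rintro ⟨⟨hf, h1⟩, hadj⟩
      rcases (adj_cherry_iff hab hac hbc).mp hadj with h | h | h
      · exact Or.inl (Or.inl ⟨hf, h, h1⟩)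
      · exact Or.inl (Or.inr ⟨hf, h, h1⟩)
      · exact Or.inr ⟨hf, h, h1⟩
    · rintro ((⟨hf, h, h1⟩ | ⟨hf, h, h1⟩) | ⟨hf, h, h1⟩) <;>
        exact ⟨⟨hf, h1⟩, (adj_cherry_iff hab hac hbc).mpr (by tauto)⟩
  have memq : ∀ (p q : V → Option V), q ∈ treesOver p → IsPForest q ∧ subF p q := by
    intro p q hq
    rw [treesOver, Finset.mem_filter] at hq
    exact ⟨hq.2.1, hq.2.2.1⟩
  have hd12 : Disjoint (treesOver (cherry1 a b c)) (treesOver (cherry2 a b c)) := by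
    rw [Finset.disjoint_left]
    intro q hq1 hq2
    obtain ⟨hf, hs1⟩ := memq _ _ hq1
    obtain ⟨-, hs2⟩ := memq _ _ hq2
    rw [subF_cherry1_iff hbc] at hs1
    rw [subF_cherry2_iff hac] at hs2
    exact hf a (TransGen.tail (TransGen.single hs2.1) hs1.1)
  have hd13 : Disjoint (treesOver (cherry1 a b c)) (treesOver (cherry3 a b c)) := by
    rw [Finset.disjoint_left]
    intro q hq1 hq2
    obtain ⟨hf, hs1⟩ := memq _ _ hq1
    obtain ⟨-, hs2⟩ := memq _ _ hq2
    rw [subF_cherry1_iff hbc] at hs1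
    rw [subF_cherry3_iff hab] at hs2
    exact hf a (TransGen.tail (TransGen.single hs2.1) hs1.2)
  have hd23 : Disjoint (treesOver (cherry2 a b c)) (treesOver (cherry3 a b c)) := by
    rw [Finset.disjoint_left]
    intro q hq1 hq2
    obtain ⟨hf, hs1⟩ := memq _ _ hq1
    obtain ⟨-, hs2⟩ := memq _ _ hq2
    rw [subF_cherry2_iff hac] at hs1
    rw [subF_cherry3_iff hab] at hs2
    rw [hs1.1] at hs2
    exact hbc (Option.some_injective _ hs2.1)
  have hBcard : (Finset.univ.filter (fun q : V → Option V =>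
        (IsPForest q ∧ (rootsF q).card = 1) ∧ (graphOf q).Adj a b ∧ (graphOf q).Adj a c)).card
      = 3 * N ^ (N - 3) := by
    rw [hBsplit, Finset.card_union_of_disjoint (by
        rw [Finset.disjoint_union_left]; exact ⟨hd13, hd23⟩),
      Finset.card_union_of_disjoint hd12, ht1, ht2, ht3]
    ring
  have hA := nat_card_subtype_graph (V := V) (fun T => T.Adj a b ∧ T.Adj a c)
  have hfil := nat_card_eq_filter (V := V) (fun q =>
    (IsPForest q ∧ (rootsF q).card = 1) ∧ (graphOf q).Adj a b ∧ (graphOf q).Adj a c)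
  rw [← hA, hfil]
  convert hBcard using 2
  exact (Finset.filter_congr_decidable _ _ _).trans
    (Finset.filter_congr_decidable _ _ _).symm

end Main

end CherryProof

/-- For `n ≥ 3` and two distinct edges `{a,b}`, `{a,c}` of `K_n`
sharing exactly one endpoint `a`, the number of spanning trees of `K_n` containing
both edges equals `3 · n^(n-4)` (read in `ℚ`, with an integer power of `n`);
equivalently, the probability that a uniformly random spanning tree contains both
edges equals `3/n²`. -/
theorem spanning_trees_containing_two_adjacent_edges (n : ℕ) (hn : 3 ≤ n)
    (a b c : Fin n) (hab : a ≠ b) (hac : a ≠ c) (hbc : b ≠ c) :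
    (Nat.card {T : SimpleGraph (Fin n) // T.IsTree ∧ T.Adj a b ∧ T.Adj a c} : ℚ) =
        3 * (n : ℚ) ^ ((n : ℤ) - 4) ∧
      (Nat.card {T : SimpleGraph (Fin n) // T.IsTree ∧ T.Adj a b ∧ T.Adj a c} : ℚ) /
          (n : ℚ) ^ (n - 2) = 3 / n ^ 2 := by
  have hNV : Nonempty (Fin n) := ⟨a⟩
  have hkey := CherryProof.main_count hab hac hbc (by rw [Fintype.card_fin]; exact hn)
  rw [Fintype.card_fin] at hkey
  set N := Nat.card {T : SimpleGraph (Fin n) // T.IsTree ∧ T.Adj a b ∧ T.Adj a c} with hNdef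
  have hn0 : (n : ℚ) ≠ 0 := by positivity
  have hNq : (N : ℚ) * n = 3 * (n : ℚ) ^ (n - 3) := by exact_mod_cast hkey
  constructor
  · have hz : (n : ℚ) ^ ((n : ℤ) - 4) = (n : ℚ) ^ (n - 3) / n := by
      have h1 : ((n : ℤ) - 4) = ((n - 3 : ℕ) : ℤ) - 1 := by omega
      rw [h1, zpow_sub₀ hn0, zpow_natCast, zpow_one]
    rw [hz]
    field_simp
    linarith [hNq]
  · rw [div_eq_div_iff (by positivity) (by positivity)]
    have hpow : (n : ℚ) ^ (n - 2) = (n : ℚ) ^ (n - 3) * n := by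
      rw [← pow_succ]
      congr 1
      omega
    calc (N : ℚ) * (n : ℚ) ^ 2 = ((N : ℚ) * n) * n := by ring
      _ = (3 * (n : ℚ) ^ (n - 3)) * n := by rw [hNq]
      _ = 3 * (n : ℚ) ^ (n - 2) := by rw [hpow]; ring
end
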